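/- For every triple of integers (n, d₁, d₂) with n ≥ 0, d₁ ≥ 1, d₂ ≥ 1, n² + 1 = d₁·d₂ and d₁ < d₂, there exists a unique nonempty finite sequence k₁, …, k_s of positive integers such that, setting M = A_{k₁}·A_{k₂}·⋯·A_{k_s}, one has Mᵀ·M = [[d₁, n], [n, d₂]]. -/

import Mathlib

open Matrix

/-- `A k` is the 2×2 integer matrix with rows `(0, 1)` and `(1, k)`. -/
def genMat (k : ℤ) : Matrix (Fin 2) (Fin 2) ℤ := !![0, 1; 1, k]

lemma genMat_symm (k : ℤ) : (genMat k)ᵀ = genMat k := by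
  ext i j; fin_cases i <;> fin_cases j <;> simp [genMat]

lemma conj_lemma (k a b c : ℤ) :
    genMat k * !![a, b; b, c] * genMat k
      = !![c, b + c*k; b + c*k, a + 2*b*k + c*k^2] := by
  ext i j; fin_cases i <;> fin_cases j <;>
    simp [genMat, Matrix.mul_apply, Fin.sum_univ_succ] <;> ring

lemma gram_append (M : Matrix (Fin 2) (Fin 2) ℤ) (k a b c : ℤ)
    (h : Mᵀ * M = !![a, b; b, c]) :
    (M * genMat k)ᵀ * (M * genMat k)
      = !![c, b + c*k; b + c*k, a + 2*b*k + c*k^2] := by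
  rw [Matrix.transpose_mul, genMat_symm, Matrix.mul_assoc, ← Matrix.mul_assoc Mᵀ, h,
    ← Matrix.mul_assoc, conj_lemma]

lemma gram_concat (l : List ℤ) (k a b c : ℤ)
    (h : ((l.map genMat).prod)ᵀ * (l.map genMat).prod = !![a, b; b, c]) :
    (((l ++ [k]).map genMat).prod)ᵀ * ((l ++ [k]).map genMat).prod
      = !![c, b + c*k; b + c*k, a + 2*b*k + c*k^2] := by
  rw [List.map_append, List.prod_append]
  simpa using gram_append _ k a b c h

lemma gram_inv : ∀ l : List ℤ, (∀ k ∈ l, 0 < k) →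
    ∃ a b c : ℤ, ((l.map genMat).prod)ᵀ * (l.map genMat).prod = !![a, b; b, c] ∧
      1 ≤ a ∧ 0 ≤ b ∧ b < c ∧ b ^ 2 + 1 = a * c ∧
      (l ≠ [] → a ≤ b ∧ 1 ≤ b) ∧ (l = [] → b = 0) := by
  intro l
  induction l using List.reverseRecOn with
  | nil =>
    intro _
    exact ⟨1, 0, 1, by
        rw [List.map_nil, List.prod_nil, Matrix.transpose_one, Matrix.mul_one,
          Matrix.one_fin_two], le_refl 1, le_refl 0, zero_lt_one,
      by ring, fun h => absurd rfl h, fun _ => rfl⟩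
  | append_singleton l k ih =>
    intro hpos
    obtain ⟨a, b, c, hg, ha, hb, hbc, hdet, _, _⟩ :=
      ih (fun x hx => hpos x (by simp [hx]))
    have hk : 0 < k := hpos k (by simp)
    have hc : 1 ≤ c := by omega
    have h1 : 0 ≤ b * (2*k - 1) := mul_nonneg hb (by omega)
    have h2 : 0 ≤ c * (k * (k - 1)) := mul_nonneg (by omega) (mul_nonneg (by omega) (by omega))
    have h3 : 0 ≤ c * (k - 1) := mul_nonneg (by omega) (by omega)
    have h4 : 1 ≤ c * k := by nlinarith
    exact ⟨c, b + c*k, a + 2*b*k + c*k^2, gram_concat l k a b c hg, hc, by nlinarith,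
      by nlinarith, by nlinarith, fun _ => ⟨by nlinarith, by nlinarith⟩, by simp⟩

lemma key : ∀ N : ℕ, ∀ n d₁ d₂ : ℤ, n ≤ (N : ℤ) → 0 ≤ n → 1 ≤ d₁ → 1 ≤ d₂ →
    n ^ 2 + 1 = d₁ * d₂ → d₁ < d₂ →
    ∃! l : List ℤ, l ≠ [] ∧ (∀ k ∈ l, 0 < k) ∧
      ((l.map genMat).prod)ᵀ * (l.map genMat).prod = !![d₁, n; n, d₂] := by
  intro N
  induction N with
  | zero =>
    intro n d₁ d₂ hN hn hd₁ hd₂ hfac hlt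
    exfalso
    have hn0 : n = 0 := by exact_mod_cast le_antisymm hN hn
    subst hn0
    nlinarith
  | succ N ih =>
    intro n d₁ d₂ hN hn hd₁ hd₂ hfac hlt
    have hn1 : 1 ≤ n := by nlinarith
    have hd₁n : d₁ ≤ n := by nlinarith
    by_cases hcase : d₁ = 1
    · -- base: d₁ = 1, unique list is [n]
      subst hcase
      have hd2 : d₂ = n ^ 2 + 1 := by linarith
      have hsingle : (([n].map genMat).prod)ᵀ * ([n].map genMat).prod = !![1, n; n, d₂] := by
        have h0 : (([] : List ℤ).map genMat).prodᵀ * (([] : List ℤ).map genMat).prod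
            = !![1, 0; 0, 1] := by
          rw [List.map_nil, List.prod_nil, Matrix.transpose_one, Matrix.mul_one,
            Matrix.one_fin_two]
        have := gram_concat [] n 1 0 1 h0
        simp only [List.nil_append] at this
        rw [this]
        ext i j
        fin_cases i <;> fin_cases j <;> simp <;> linarith
      refine ⟨[n], ⟨by simp, by simpa using (show 0 < n by omega), hsingle⟩, ?_⟩
      rintro l ⟨hne, hpos, hgram⟩
      rcases List.eq_nil_or_concat l with rfl | ⟨l', k', rfl⟩
      · exact absurd rfl hne
      rw [List.concat_eq_append] at hpos hgram ⊢
      obtain ⟨a', b', c', hg', ha', hb', hbc', hdet', hne', hnil'⟩ :=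
        gram_inv l' (fun x hx => hpos x (by simp [hx]))
      have hk' : 0 < k' := hpos k' (by simp)
      have heq := (gram_concat l' k' a' b' c' hg').symm.trans hgram
      have e00 : c' = 1 := by simpa using congrFun (congrFun heq 0) 0
      have e01 : b' + c' * k' = n := by simpa using congrFun (congrFun heq 0) 1
      have hb'0 : b' = 0 := by omega
      have hl'nil : l' = [] := by
        by_contra h
        have := (hne' h).2
        omega
      subst hl'nil
      have : k' = n := by
        rw [hb'0, e00] at e01
        linarith
      rw [this]
      rfl
    · -- inductive step: d₁ ≥ 2
      have hd₁2 : 2 ≤ d₁ := by omega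
      set k : ℤ := n / d₁ with hk_def
      set b : ℤ := n % d₁ with hb_def
      have hdiv : d₁ * k + b = n := Int.mul_ediv_add_emod n d₁
      have hb0 : 0 ≤ b := Int.emod_nonneg n (by omega)
      have hbd : b < d₁ := Int.emod_lt_of_pos n (by omega)
      set a : ℤ := d₂ + d₁ * k ^ 2 - 2 * n * k with ha_def
      have hba : b ^ 2 + 1 = a * d₁ := by
        have hnb : n = d₁ * k + b := hdiv.symm
        rw [ha_def]
        linear_combination hfac - (b + n - d₁ * k) * hnb
      have ha1 : 1 ≤ a := by
        by_contra h
        push_neg at h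
        nlinarith [mul_nonneg (by omega : (0:ℤ) ≤ -a) (by omega : (0:ℤ) ≤ d₁), sq_nonneg b]
      have hb1 : 1 ≤ b := by
        by_contra h
        push_neg at h
        have hb00 : b = 0 := by omega
        rw [hb00] at hba
        nlinarith
      have hab : a ≤ b := by
        by_contra h
        push_neg at h
        have h1 : (b + 1) * (b + 1) ≤ a * d₁ :=
          mul_le_mul (by omega) (by omega) (by omega) (by omega)
        nlinarith
      have hk1 : 1 ≤ k := by
        by_contra h
        push_neg at h
        have : d₁ * k ≤ 0 := mul_nonpos_iff.mpr (Or.inl ⟨by omega, by omega⟩)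
        linarith
      have hbN : b ≤ (N : ℤ) := by
        have : n ≤ (N : ℤ) + 1 := by push_cast at hN; linarith
        omega
      obtain ⟨l₀, ⟨hl₀ne, hl₀pos, hl₀g⟩, hl₀uniq⟩ :=
        ih b a d₁ hbN hb0 ha1 hd₁ hba (by linarith)
      have hgram0 : (((l₀ ++ [k]).map genMat).prod)ᵀ * ((l₀ ++ [k]).map genMat).prod
          = !![d₁, n; n, d₂] := by
        rw [gram_concat l₀ k a b d₁ hl₀g]
        have e1 : b + d₁ * k = n := by linarith
        have e2 : a + 2 * b * k + d₁ * k ^ 2 = d₂ := by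
          rw [ha_def]; linear_combination 2 * k * hdiv
        rw [e1, e2]
      refine ⟨l₀ ++ [k], ⟨by simp, ?_, hgram0⟩, ?_⟩
      · intro x hx
        rcases List.mem_append.mp hx with h | h
        · exact hl₀pos x h
        · simp at h; omega
      rintro l ⟨hne, hpos, hgram⟩
      rcases List.eq_nil_or_concat l with rfl | ⟨l', k', rfl⟩
      · exact absurd rfl hne
      rw [List.concat_eq_append] at hpos hgram ⊢
      obtain ⟨a', b', c', hg', ha', hb', hbc', hdet', hne', hnil'⟩ :=
        gram_inv l' (fun x hx => hpos x (by simp [hx]))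
      have hk' : 0 < k' := hpos k' (by simp)
      have heq := (gram_concat l' k' a' b' c' hg').symm.trans hgram
      have e00 : c' = d₁ := by simpa using congrFun (congrFun heq 0) 0
      have e01 : b' + c' * k' = n := by simpa using congrFun (congrFun heq 0) 1
      have huniq := (Int.ediv_emod_unique (a := n) (b := d₁) (q := k') (r := b')
        (by omega)).mpr ⟨by rw [e00] at e01; linarith, hb', by omega⟩
      have hkk : k' = k := huniq.1.symm
      have hbb : b' = b := huniq.2.symm
      have haa : a' = a := by
        have h1 : a' * d₁ = a * d₁ := by
          calc a' * d₁ = a' * c' := by rw [e00]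
            _ = b' ^ 2 + 1 := hdet'.symm
            _ = b ^ 2 + 1 := by rw [hbb]
            _ = a * d₁ := hba
        exact mul_right_cancel₀ (by omega) h1
      have hl'ne : l' ≠ [] := by
        intro h
        have := hnil' h
        omega
      have : l' = l₀ := by
        apply hl₀uniq
        refine ⟨hl'ne, fun x hx => hpos x (by simp [hx]), ?_⟩
        rw [hg', haa, hbb, e00]
      rw [this, hkk]


/-- Every factorisation `n² + 1 = d₁·d₂` with `0 ≤ n`, `1 ≤ d₁`,
`1 ≤ d₂` and `d₁ < d₂` comes from a unique nonempty finite sequence `k₁, …, k_s` of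
positive integers with `(A_{k₁}⋯A_{k_s})ᵀ·(A_{k₁}⋯A_{k_s}) = [[d₁, n], [n, d₂]]`. -/
theorem factorisation_unique_word (n d₁ d₂ : ℤ) (hn : 0 ≤ n)
    (hd₁ : 1 ≤ d₁) (hd₂ : 1 ≤ d₂) (hfac : n ^ 2 + 1 = d₁ * d₂) (hlt : d₁ < d₂) :
    ∃! l : List ℤ, l ≠ [] ∧ (∀ k ∈ l, 0 < k) ∧
      ((l.map genMat).prod)ᵀ * (l.map genMat).prod = !![d₁, n; n, d₂] := by
  exact key n.toNat n d₁ d₂ (by rw [Int.toNat_of_nonneg hn]) hn hd₁ hd₂ hfac hlt
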